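/- arXiv:1208.3429 — 5 statements merged into one kernel-verified Lean document; each statement's English description precedes it below -/
import Mathlib

section
/- Let s be a complex number with Re(s) < 0. Then ζ(s) = [sin(πs/2) / (2^{1−s} − 1)] · ∫_0^∞ t^{−s} / sinh(πt) dt. -/
open MeasureTheory

open Complex Real Set Filter


lemma odd_zeta_tsum {z : ℂ} (hz : 1 < z.re) :
    ∑' k : ℕ, ((2 * k + 1 : ℕ) : ℂ) ^ (-z) = (1 - 2 ^ (-z)) * riemannZeta z := by
  set f : ℕ → ℂ := fun n ↦ 1 / (n : ℂ) ^ z with hf_def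
  have hf : Summable f := (summable_one_div_nat_cpow).mpr hz
  have h0 : HasSum f (riemannZeta z) := by
    rw [zeta_eq_tsum_one_div_nat_cpow hz]; exact hf.hasSum
  have hz0 : z ≠ 0 := by
    intro h; rw [h] at hz; simp at hz; linarith
  have key : ∀ k : ℕ, f (2 * k) = 2 ^ (-z) * f k := by
    intro k
    simp only [hf_def]
    push_cast
    rw [show ((2 : ℂ) * k) = ((2 : ℝ) : ℂ) * ((k : ℝ) : ℂ) by push_cast; ring,
      mul_cpow_ofReal_nonneg (by norm_num) (Nat.cast_nonneg k), cpow_neg]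
    push_cast
    rw [one_div, one_div, mul_inv]
  have he : HasSum (fun k ↦ f (2 * k)) ((2 : ℂ) ^ (-z) * riemannZeta z) := by
    simpa only [← key] using h0.mul_left ((2 : ℂ) ^ (-z))
  have ho : Summable (fun k ↦ f (2 * k + 1)) :=
    hf.comp_injective (fun a b h ↦ by omega)
  have htot := he.even_add_odd ho.hasSum
  have := h0.unique htot
  have hodd : ∑' k, f (2 * k + 1) = (1 - 2 ^ (-z)) * riemannZeta z := by
    rw [sub_mul, one_mul]
    linear_combination -this
  rw [← hodd]
  congr 1 with k
  simp only [hf_def, one_div, ← cpow_neg]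


lemma sinh_hasSum {t : ℝ} (ht : 0 < t) :
    HasSum (fun i : ℕ ↦ 2 * rexp (-π * (2 * i + 1) * t)) (Real.sinh (π * t))⁻¹ := by
  set x := π * t with hx
  have hx0 : 0 < x := mul_pos Real.pi_pos ht
  have hlt : rexp (-(2 * x)) < 1 := exp_lt_one_iff.mpr (by linarith)
  have hgeo : HasSum (fun i : ℕ ↦ (rexp (-(2 * x))) ^ i) (1 - rexp (-(2 * x)))⁻¹ :=
    hasSum_geometric_of_lt_one (exp_nonneg _) hlt
  have := hgeo.mul_left (2 * rexp (-x))
  have heq : ∀ i : ℕ, 2 * rexp (-x) * rexp (-(2 * x)) ^ i = 2 * rexp (-π * (2 * i + 1) * t) := by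
    intro i
    rw [← Real.exp_nat_mul, mul_assoc, ← Real.exp_add]
    congr 2
    rw [hx]; push_cast; ring
  have hval : 2 * rexp (-x) * (1 - rexp (-(2 * x)))⁻¹ = (Real.sinh x)⁻¹ := by
    have h1 : 1 - rexp (-(2 * x)) ≠ 0 := by linarith
    have h2 : Real.sinh x ≠ 0 := ne_of_gt (Real.sinh_pos_iff.mpr hx0)
    have huv : rexp x * rexp (-x) = 1 := by rw [← Real.exp_add]; simp
    have h2x : rexp (-(2 * x)) = rexp (-x) * rexp (-x) := by
      rw [← Real.exp_add]; ring_nf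
    have h2' : rexp x - rexp (-x) ≠ 0 := by
      intro h; apply h2; rw [Real.sinh_eq, h]; simp
    rw [Real.sinh_eq]
    rw [h2x] at h1 ⊢
    rw [inv_div]
    rw [eq_div_iff h2']
    have h5 : 2 * rexp (-x) * (1 - rexp (-x) * rexp (-x))⁻¹ * (rexp x - rexp (-x)) =
        2 * (1 - rexp (-x) * rexp (-x))⁻¹ * (1 - rexp (-x) * rexp (-x)) := by
      linear_combination (2 * (1 - rexp (-x) * rexp (-x))⁻¹) * huv
    rw [h5, mul_assoc, inv_mul_cancel₀ h1, mul_one]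
  rw [← hval]
  simpa only [heq] using this


lemma sinh_integral_aux {s : ℂ} (hs : s.re < 0) :
    ∫ t in Set.Ioi (0 : ℝ), (t : ℂ) ^ (-s) / (Real.sinh (π * t) : ℂ) =
      (π : ℂ) ^ (s - 1) * Complex.Gamma (1 - s) * 2 *
        ((1 - 2 ^ (s - 1)) * riemannZeta (1 - s)) := by
  set z := 1 - s with hz_def
  have hz : 1 < z.re := by simp [hz_def, Complex.sub_re]; linarith
  have hz0 : 0 < z.re := by linarith
  set F : ℝ → ℂ := fun t ↦ ((Real.sinh (π * t) : ℝ) : ℂ)⁻¹ with hF_def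
  have key := hasSum_mellin_pi_mul (F := F) (s := z) (a := fun _ : ℕ ↦ (2 : ℂ))
    (q := fun i : ℕ ↦ 2 * i + 1) (fun i ↦ Or.inr (by positivity)) hz0
    (fun t ht ↦ ?_) ?_
  · have h1 : mellin F z = ∫ t in Set.Ioi (0 : ℝ), (t : ℂ) ^ (-s) / (Real.sinh (π * t) : ℂ) := by
      rw [mellin]
      refine setIntegral_congr_fun measurableSet_Ioi (fun t ht ↦ ?_)
      rw [smul_eq_mul, hF_def, show z - 1 = -s by rw [hz_def]; ring, div_eq_mul_inv]
    have h3 := key.tsum_eq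
    beta_reduce at h3
    rw [← h1, ← h3]
    have h2 : ∀ i : ℕ, (π : ℂ) ^ (-z) * Complex.Gamma z * 2 / ((2 * (i : ℝ) + 1 : ℝ) : ℂ) ^ z =
        (π : ℂ) ^ (-z) * Complex.Gamma z * 2 * ((2 * i + 1 : ℕ) : ℂ) ^ (-z) := by
      intro i
      rw [show ((2 * i + 1 : ℕ) : ℂ) = ((2 * (i : ℝ) + 1 : ℝ) : ℂ) by push_cast; ring,
        Complex.cpow_neg ((2 * (i : ℝ) + 1 : ℝ) : ℂ) z, div_eq_mul_inv]
    rw [tsum_congr h2, tsum_mul_left, odd_zeta_tsum hz]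
    rw [show -z = s - 1 by rw [hz_def]; ring, hz_def]
  · -- hF
    have h4 := (sinh_hasSum ht).map Complex.ofRealHom Complex.continuous_ofReal
    simp only [Function.comp_def, map_mul, Complex.ofRealHom_eq_coe, Complex.ofReal_inv,
      Complex.ofReal_ofNat] at h4
    convert h4 using 1
  · -- summability
    have hc : 1 < z.re := hz
    have hsum : Summable (fun i : ℕ ↦ 2 / ((i : ℝ) + 1) ^ z.re) := by
      have := (Real.summable_one_div_nat_rpow (p := z.re)).mpr hc
      have h3 := (summable_nat_add_iff 1).mpr this
      simpa [div_eq_mul_inv] using h3.mul_left 2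
    apply Summable.of_nonneg_of_le (fun i ↦ by positivity) (fun i ↦ ?_) hsum
    have hbase : ((i : ℝ) + 1) ≤ 2 * i + 1 := by push_cast; linarith [Nat.cast_nonneg (α := ℝ) i]
    rw [Complex.norm_ofNat]
    gcongr

theorem zeta_sinh_integral_neg_re (s : ℂ) (hs : s.re < 0) :
    riemannZeta s = Complex.sin ((Real.pi : ℂ) * s / 2) / ((2 : ℂ) ^ (1 - s) - 1) *
      ∫ t in Set.Ioi (0 : ℝ), (t : ℂ) ^ (-s) / (Real.sinh (Real.pi * t) : ℂ) := by
  have hs1 : ∀ n : ℕ, (1 - s) ≠ -n := by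
    intro n h
    have := congrArg Complex.re h
    simp [Complex.sub_re] at this
    have : (0:ℝ) ≤ n := Nat.cast_nonneg n
    linarith
  have hs2 : (1 - s) ≠ 1 := by
    intro h
    have := congrArg Complex.re h
    simp [Complex.sub_re] at this
    linarith
  have FE := riemannZeta_one_sub hs1 hs2
  rw [show (1 : ℂ) - (1 - s) = s by ring] at FE
  rw [show (π : ℂ) * (1 - s) / 2 = π / 2 - π * s / 2 by ring,
    Complex.cos_pi_div_two_sub] at FE
  have h2pi : (2 * (π : ℂ)) ^ (-(1 - s)) = (2 : ℂ) ^ (s - 1) * (π : ℂ) ^ (s - 1) := by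
    rw [show -(1 - s) = s - 1 by ring,
      show (2 * (π : ℂ)) = ((2 : ℝ) : ℂ) * ((π : ℝ) : ℂ) by norm_num,
      mul_cpow_ofReal_nonneg (by norm_num) Real.pi_pos.le]
    norm_num
  rw [h2pi] at FE
  have hden : (2 : ℂ) ^ (1 - s) - 1 ≠ 0 := by
    intro h
    have h1 : (2 : ℂ) ^ (1 - s) = 1 := by linear_combination h
    have h2 : ‖(2 : ℂ) ^ (1 - s)‖ = (2 : ℝ) ^ (1 - s).re := by
      rw [show (2 : ℂ) = ((2 : ℝ) : ℂ) by norm_num,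
        Complex.norm_cpow_eq_rpow_re_of_pos (by norm_num)]
    rw [h1] at h2
    simp [Complex.sub_re] at h2
    have h3 : (1 : ℝ) < (2 : ℝ) ^ (1 - s.re) := by
      rw [show (1:ℝ) = (2:ℝ)^(0:ℝ) by simp]
      apply Real.rpow_lt_rpow_of_exponent_lt (by norm_num)
      linarith
    rw [← h2] at h3
    simp at h3
  have key : (2 : ℂ) ^ (s - 1) * ((2 : ℂ) ^ (1 - s) - 1) = 1 - 2 ^ (s - 1) := by
    rw [mul_sub, mul_one, ← Complex.cpow_add _ _ (by norm_num : (2:ℂ) ≠ 0)]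
    norm_num
  rw [sinh_integral_aux hs, FE, div_mul_eq_mul_div, eq_div_iff hden]
  linear_combination (2 * (π : ℂ) ^ (s - 1) * Complex.Gamma (1 - s) *
    Complex.sin ((π : ℂ) * s / 2) * riemannZeta (1 - s)) * key
end

section
/- Let s be a complex number with 0 < Re(s) < 2 and s ≠ 1. Then ζ(s) = −[π^{s−1} · sin(πs/2) / (s−1)] · ∫_0^∞ t^{1−s} · (1/sinh²(t) − 1/t²) dt. -/
open MeasureTheory

open Complex Set Filter Asymptotics Topology

noncomputable def zff (t : ℝ) : ℂ := ((1 / Real.sinh t ^ 2 - 1 / t ^ 2 : ℝ) : ℂ)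
noncomputable def zFF (t : ℝ) : ℂ := ((1 / Real.sinh t ^ 2 : ℝ) : ℂ)
noncomputable def zgg (t : ℝ) : ℂ := ((1 / t ^ 2 : ℝ) : ℂ)

lemma zff_eq (t : ℝ) : zff t = zFF t - zgg t := by
  rw [zff, zFF, zgg, Complex.ofReal_sub]

lemma sinh_le_mul_cosh {t : ℝ} (ht : 0 ≤ t) : Real.sinh t ≤ t * Real.cosh t := by
  have hd : ∀ x : ℝ, HasDerivAt (fun y : ℝ => y * Real.cosh y - Real.sinh y)
      (x * Real.sinh x) x := by
    intro x
    have h1 := ((hasDerivAt_id x).mul (Real.hasDerivAt_cosh x)).sub (Real.hasDerivAt_sinh x)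
    refine h1.congr_deriv ?_
    simp [id_eq]
  have hmono : Monotone (fun y : ℝ => y * Real.cosh y - Real.sinh y) := by
    refine monotone_of_deriv_nonneg (fun x => (hd x).differentiableAt) (fun x => ?_)
    rw [(hd x).deriv]
    rcases le_or_gt 0 x with h | h
    · exact mul_nonneg h (by rwa [Real.sinh_nonneg_iff])
    · have hs : Real.sinh x ≤ 0 := Real.sinh_nonpos_iff.mpr h.le
      nlinarith
  have := hmono ht
  simp only [Real.cosh_zero, Real.sinh_zero, mul_one, zero_mul, sub_zero, zero_sub] at this
  linarith

lemma zff_norm_le_one {t : ℝ} (ht : 0 < t) : ‖zff t‖ ≤ 1 := by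
  have h1 : t ≤ Real.sinh t := Real.self_le_sinh_iff.mpr ht.le
  have hs : 0 < Real.sinh t := ht.trans_le h1
  have h2 : Real.sinh t ≤ t * Real.cosh t := sinh_le_mul_cosh ht.le
  have hsq : Real.cosh t ^ 2 = Real.sinh t ^ 2 + 1 := Real.cosh_sq t
  have ht2 : (0:ℝ) < t ^ 2 := by positivity
  have e : 1 / Real.sinh t ^ 2 - 1 / t ^ 2
      = (t ^ 2 - Real.sinh t ^ 2) / (t ^ 2 * Real.sinh t ^ 2) := by
    rw [div_sub_div _ _ (ne_of_gt (by positivity : (0:ℝ) < Real.sinh t ^ 2)) (ne_of_gt ht2),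
      one_mul, mul_one, mul_comm (Real.sinh t ^ 2) (t ^ 2)]
  have hnum : 0 ≤ Real.sinh t ^ 2 - t ^ 2 := by nlinarith
  have h3 : Real.sinh t ^ 2 ≤ t ^ 2 * Real.cosh t ^ 2 := by
    nlinarith [mul_self_le_mul_self hs.le h2]
  rw [zff, Complex.norm_real, Real.norm_eq_abs, e, abs_div,
    _root_.abs_of_pos (by positivity : (0:ℝ) < t ^ 2 * Real.sinh t ^ 2), abs_sub_comm,
    _root_.abs_of_nonneg hnum, div_le_one (by positivity)]
  nlinarith

lemma zFF_norm_le {t : ℝ} (ht : 0 < t) : ‖zFF t‖ ≤ 1 / t ^ 2 := by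
  have h1 : t ≤ Real.sinh t := Real.self_le_sinh_iff.mpr ht.le
  have hs : 0 < Real.sinh t := ht.trans_le h1
  rw [zFF, Complex.norm_real, Real.norm_eq_abs, _root_.abs_of_nonneg (by positivity)]
  exact one_div_le_one_div_of_le (by positivity) (by nlinarith)

lemma rpow_neg_two_eq {t : ℝ} (ht : 0 < t) : t ^ (-2:ℝ) = 1 / t ^ 2 := by
  rw [show (-2:ℝ) = -(2:ℕ) by norm_num, Real.rpow_neg ht.le, Real.rpow_natCast, one_div]

lemma zff_norm_le_two_div {t : ℝ} (ht : 0 < t) : ‖zff t‖ ≤ 2 * t ^ (-2:ℝ) := by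
  have h1 : t ≤ Real.sinh t := Real.self_le_sinh_iff.mpr ht.le
  have hs : 0 < Real.sinh t := ht.trans_le h1
  have tri : ∀ a b : ℝ, |a - b| ≤ |a| + |b| := fun a b => by
    simpa [sub_eq_add_neg, abs_neg] using abs_add_le a (-b)
  rw [rpow_neg_two_eq ht, zff, Complex.norm_real, Real.norm_eq_abs]
  have hb1 : |1 / Real.sinh t ^ 2| ≤ 1 / t ^ 2 := by
    rw [_root_.abs_of_nonneg (by positivity)]
    exact one_div_le_one_div_of_le (by positivity) (by nlinarith)
  have hb2 : |1 / t ^ 2| = 1 / t ^ 2 := _root_.abs_of_nonneg (by positivity)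
  calc |1 / Real.sinh t ^ 2 - 1 / t ^ 2| ≤ |1 / Real.sinh t ^ 2| + |1 / t ^ 2| := tri _ _
    _ ≤ 1 / t ^ 2 + 1 / t ^ 2 := by rw [hb2]; linarith
    _ = 2 * (1 / t ^ 2) := by ring

lemma zFF_exp_bound {t : ℝ} (ht : 1 ≤ t) : ‖zFF t‖ ≤ 16 * Real.exp (-2 * t) := by
  have ht0 : 0 < t := lt_of_lt_of_le one_pos ht
  have h2e : (2:ℝ) ≤ Real.exp 1 := by linarith [Real.add_one_le_exp 1]
  have hexpt : (1:ℝ) ≤ Real.exp t := by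
    calc (1:ℝ) = Real.exp 0 := (Real.exp_zero).symm
      _ ≤ Real.exp t := Real.exp_le_exp.mpr ht0.le
  have hen : Real.exp (-t) ≤ 1 / 2 := by
    have e1 : Real.exp (-t) ≤ Real.exp (-1) := Real.exp_le_exp.mpr (by linarith)
    have e2 : Real.exp (-1) ≤ 1 / 2 := by
      rw [Real.exp_neg, ← one_div]
      exact one_div_le_one_div_of_le two_pos h2e
    linarith
  have h4 : Real.exp t / 4 ≤ Real.sinh t := by
    rw [Real.sinh_eq]
    linarith
  have hp : 0 < Real.exp t / 4 := by positivity
  have hs : 0 < Real.sinh t := lt_of_lt_of_le hp h4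
  rw [zFF, Complex.norm_real, Real.norm_eq_abs, _root_.abs_of_nonneg (by positivity)]
  have hsq : (Real.exp t / 4) ^ 2 ≤ Real.sinh t ^ 2 := by nlinarith
  have hstep : 1 / Real.sinh t ^ 2 ≤ 1 / ((Real.exp t / 4) ^ 2) :=
    one_div_le_one_div_of_le (by positivity) hsq
  refine hstep.trans (le_of_eq ?_)
  have he : Real.exp (-2 * t) = (Real.exp t ^ 2)⁻¹ := by
    rw [show (-2:ℝ) * t = -(t + t) by ring, Real.exp_neg, Real.exp_add, sq]
  rw [he]
  have h0 : Real.exp t ≠ 0 := (Real.exp_pos t).ne'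
  field_simp
  ring
lemma zff_meas : Measurable zff := by
  apply Complex.measurable_ofReal.comp
  exact (measurable_const.div (Real.continuous_sinh.measurable.pow_const 2)).sub
    (measurable_const.div (measurable_id.pow_const 2))

lemma zFF_meas : Measurable zFF := by
  apply Complex.measurable_ofReal.comp
  exact measurable_const.div (Real.continuous_sinh.measurable.pow_const 2)

lemma zff_contOn : ContinuousOn zff (Set.Ioi (0:ℝ)) := by
  apply Complex.continuous_ofReal.comp_continuousOn
  apply ContinuousOn.sub
  · exact ContinuousOn.div continuousOn_const
      (Real.continuous_sinh.continuousOn.pow 2)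
      (fun t ht => pow_ne_zero 2 (ne_of_gt (Real.sinh_pos_iff.mpr ht)))
  · exact ContinuousOn.div continuousOn_const ((continuous_pow 2).continuousOn)
      (fun t ht => pow_ne_zero 2 (ne_of_gt ht))

lemma zFF_contOn : ContinuousOn zFF (Set.Ioi (0:ℝ)) := by
  apply Complex.continuous_ofReal.comp_continuousOn
  exact ContinuousOn.div continuousOn_const
    (Real.continuous_sinh.continuousOn.pow 2)
    (fun t ht => pow_ne_zero 2 (ne_of_gt (Real.sinh_pos_iff.mpr ht)))

lemma zff_locInt : LocallyIntegrableOn zff (Set.Ioi (0:ℝ)) :=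
  zff_contOn.locallyIntegrableOn measurableSet_Ioi

lemma zFF_locInt : LocallyIntegrableOn zFF (Set.Ioi (0:ℝ)) :=
  zFF_contOn.locallyIntegrableOn measurableSet_Ioi

lemma f1_int : IntegrableOn (Set.indicator (Set.Ioc 0 1) zff) (Set.Ioi (0:ℝ)) := by
  have hbound : IntegrableOn (Set.indicator (Set.Ioc (0:ℝ) 1) (fun _ => (1:ℝ))) (Set.Ioi 0) := by
    rw [IntegrableOn, integrable_indicator_iff measurableSet_Ioc]
    exact (integrableOn_const_iff (C := (1:ℝ))).mpr (Or.inr ((Measure.restrict_apply_le _ _).trans_lt measure_Ioc_lt_top))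
  refine Integrable.mono' hbound (zff_meas.indicator measurableSet_Ioc).aestronglyMeasurable ?_
  refine Filter.Eventually.of_forall fun t => ?_
  by_cases h : t ∈ Set.Ioc (0:ℝ) 1
  · rw [Set.indicator_of_mem h, Set.indicator_of_mem h]
    exact zff_norm_le_one h.1
  · simp [Set.indicator_of_notMem h]

lemma F2_int : IntegrableOn (Set.indicator (Set.Ioi 1) zFF) (Set.Ioi (0:ℝ)) := by
  have hbound : IntegrableOn (fun t => 16 * Real.exp (-2 * t)) (Set.Ioi (0:ℝ)) := by
    exact (exp_neg_integrableOn_Ioi (0:ℝ) (b := 2) two_pos).const_mul 16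
  refine Integrable.mono' hbound (zFF_meas.indicator measurableSet_Ioi).aestronglyMeasurable ?_
  refine Filter.Eventually.of_forall fun t => ?_
  by_cases h : t ∈ Set.Ioi (1:ℝ)
  · rw [Set.indicator_of_mem h]
    exact zFF_exp_bound (le_of_lt h)
  · rw [Set.indicator_of_notMem h]
    simp only [norm_zero]
    positivity

lemma zff_isBigO_top : zff =O[atTop] (fun t : ℝ => t ^ (-2:ℝ)) := by
  rw [isBigO_iff]
  refine ⟨2, ?_⟩
  filter_upwards [eventually_gt_atTop (0:ℝ)] with t ht
  rw [Real.norm_eq_abs, _root_.abs_of_pos (Real.rpow_pos_of_pos ht _)]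
  exact zff_norm_le_two_div ht

lemma zff_isBigO_zero : zff =O[𝓝[>] (0:ℝ)] (fun t : ℝ => t ^ (-(0:ℝ))) := by
  rw [isBigO_iff]
  refine ⟨1, ?_⟩
  filter_upwards [self_mem_nhdsWithin] with t ht
  simp only [neg_zero, Real.rpow_zero, norm_one, mul_one]
  exact zff_norm_le_one ht

lemma zFF_isBigO_zero : zFF =O[𝓝[>] (0:ℝ)] (fun t : ℝ => t ^ (-2:ℝ)) := by
  rw [isBigO_iff]
  refine ⟨1, ?_⟩
  filter_upwards [self_mem_nhdsWithin] with t ht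
  rw [Real.norm_eq_abs, _root_.abs_of_pos (Real.rpow_pos_of_pos ht _), one_mul,
    rpow_neg_two_eq ht]
  exact zFF_norm_le ht

lemma zFF_isBigO_top : zFF =O[atTop] (fun t : ℝ => Real.exp (-2 * t)) := by
  rw [isBigO_iff]
  refine ⟨16, ?_⟩
  filter_upwards [eventually_ge_atTop (1:ℝ)] with t ht
  rw [Real.norm_eq_abs, _root_.abs_of_pos (Real.exp_pos _)]
  exact zFF_exp_bound ht

lemma f1_isBigO_top (a : ℝ) :
    (Set.indicator (Set.Ioc 0 1) zff) =O[atTop] (fun t : ℝ => t ^ (-a)) := by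
  rw [isBigO_iff]
  refine ⟨0, ?_⟩
  filter_upwards [eventually_gt_atTop (1:ℝ)] with t ht
  rw [Set.indicator_of_notMem (fun h => absurd h.2 (not_le.mpr ht))]
  simp

lemma f1_isBigO_zero :
    (Set.indicator (Set.Ioc 0 1) zff) =O[𝓝[>] (0:ℝ)] (fun t : ℝ => t ^ (-(0:ℝ))) := by
  rw [isBigO_iff]
  refine ⟨1, ?_⟩
  filter_upwards [self_mem_nhdsWithin] with t ht
  simp only [neg_zero, Real.rpow_zero, norm_one, mul_one]
  by_cases h : t ∈ Set.Ioc (0:ℝ) 1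
  · rw [Set.indicator_of_mem h]; exact zff_norm_le_one h.1
  · rw [Set.indicator_of_notMem h]; simp

lemma F2_isBigO_zero :
    (Set.indicator (Set.Ioi 1) zFF) =O[𝓝[>] (0:ℝ)] (fun t : ℝ => t ^ (-(0:ℝ))) := by
  rw [isBigO_iff]
  refine ⟨1, ?_⟩
  filter_upwards [Ioo_mem_nhdsGT_of_mem (Set.left_mem_Ico.mpr one_pos)] with t ht
  have hnm : t ∉ Set.Ioi (1:ℝ) := by
    simp only [Set.mem_Ioi, not_lt]
    exact le_of_lt ht.2
  rw [Set.indicator_of_notMem hnm]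
  simp

lemma F2_isBigO_top :
    (Set.indicator (Set.Ioi 1) zFF) =O[atTop] (fun t : ℝ => Real.exp (-2 * t)) := by
  rw [isBigO_iff]
  refine ⟨16, ?_⟩
  filter_upwards [eventually_ge_atTop (1:ℝ)] with t ht
  rw [Real.norm_eq_abs, _root_.abs_of_pos (Real.exp_pos _)]
  by_cases h : t ∈ Set.Ioi (1:ℝ)
  · rw [Set.indicator_of_mem h]; exact zFF_exp_bound ht
  · rw [Set.indicator_of_notMem h]
    simp only [norm_zero]
    positivity
noncomputable def zAA : ℂ → ℂ := mellin (Set.indicator (Set.Ioc 0 1) zff)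
noncomputable def zBB : ℂ → ℂ := mellin (Set.indicator (Set.Ioi 1) zFF)

lemma mellin_indicator_eq (g : ℝ → ℂ) (S : Set ℝ) (hS : MeasurableSet S)
    (hsub : S ⊆ Set.Ioi 0) (w : ℂ) :
    mellin (Set.indicator S g) w = ∫ t in S, (t:ℂ) ^ (w - 1) * g t := by
  rw [mellin]
  simp_rw [← Set.indicator_smul, integral_indicator hS,
    Measure.restrict_restrict_of_subset hsub, smul_eq_mul]

lemma mellinConvergent_indicator_iff (g : ℝ → ℂ) (S : Set ℝ) (hS : MeasurableSet S)
    (hsub : S ⊆ Set.Ioi 0) (w : ℂ) :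
    MellinConvergent (Set.indicator S g) w
      ↔ IntegrableOn (fun t : ℝ => (t:ℂ) ^ (w - 1) * g t) S := by
  simp_rw [MellinConvergent, ← Set.indicator_smul, IntegrableOn,
    integrable_indicator_iff hS, IntegrableOn,
    Measure.restrict_restrict_of_subset hsub, smul_eq_mul]

lemma zAA_eq (w : ℂ) : zAA w = ∫ t in Set.Ioc (0:ℝ) 1, (t:ℂ) ^ (w - 1) * zff t :=
  mellin_indicator_eq zff _ measurableSet_Ioc Set.Ioc_subset_Ioi_self w

lemma zBB_eq (w : ℂ) : zBB w = ∫ t in Set.Ioi (1:ℝ), (t:ℂ) ^ (w - 1) * zFF t :=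
  mellin_indicator_eq zFF _ measurableSet_Ioi (Set.Ioi_subset_Ioi zero_le_one) w

lemma split_integral (g : ℝ → ℂ) (h : IntegrableOn g (Set.Ioi (0:ℝ))) :
    ∫ t in Set.Ioi (0:ℝ), g t
      = (∫ t in Set.Ioc (0:ℝ) 1, g t) + ∫ t in Set.Ioi (1:ℝ), g t := by
  rw [← Set.Ioc_union_Ioi_eq_Ioi (zero_le_one' ℝ)] at h ⊢
  rw [setIntegral_union Set.Ioc_disjoint_Ioi_same measurableSet_Ioi
    (h.mono_set Set.subset_union_left) (h.mono_set Set.subset_union_right)]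

lemma cpow_neg_two_eq {t : ℝ} (ht : 0 < t) : (t:ℂ) ^ (-2:ℂ) = zgg t := by
  have h1 : (-2:ℂ) = -((2:ℕ):ℂ) := by norm_num
  rw [zgg, h1, cpow_neg, cpow_natCast]
  push_cast
  rw [one_div]

lemma key3 {w : ℂ} {t : ℝ} (ht : 0 < t) :
    (t:ℂ) ^ (w - 3) = (t:ℂ) ^ (w - 1) * zgg t := by
  have ht0 : (t:ℂ) ≠ 0 := Complex.ofReal_ne_zero.mpr ht.ne'
  rw [show w - 3 = (w - 1) + (-2) by ring, cpow_add _ _ ht0, cpow_neg_two_eq ht]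

lemma mellin_zff_split {w : ℂ} (h0 : 0 < w.re) (h2 : w.re < 2) :
    mellin zff w = zAA w + zBB w + 1 / (w - 2) := by
  have hmc : MellinConvergent zff w :=
    mellinConvergent_of_isBigO_rpow zff_locInt zff_isBigO_top h2 zff_isBigO_zero h0
  have hint : IntegrableOn (fun t : ℝ => (t:ℂ) ^ (w - 1) • zff t) (Set.Ioi 0) := hmc
  have hI2 : IntegrableOn (fun t : ℝ => (t:ℂ) ^ (w - 3)) (Set.Ioi 1) :=
    integrableOn_Ioi_cpow_of_lt
      (by simp only [Complex.sub_re, Complex.ofReal_re]; norm_num; linarith) zero_lt_one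
  have h_a : IntegrableOn (fun t : ℝ => (t:ℂ) ^ (w - 1) * zFF t) (Set.Ioi 1) := by
    have hsum := (hint.mono_set (Set.Ioi_subset_Ioi zero_le_one)).add hI2
    refine hsum.congr ((ae_restrict_iff' measurableSet_Ioi).mpr (.of_forall fun t ht => ?_))
    have ht0 : (0:ℝ) < t := lt_trans zero_lt_one ht
    simp only [Pi.add_apply, smul_eq_mul]
    rw [zff_eq, mul_sub, key3 ht0]
    ring
  have e2 : ∫ t in Set.Ioi (1:ℝ), (t:ℂ) ^ (w - 1) • zff t
      = zBB w - ∫ t in Set.Ioi (1:ℝ), (t:ℂ) ^ (w - 3) := by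
    rw [zBB_eq, ← integral_sub h_a hI2]
    refine setIntegral_congr_fun measurableSet_Ioi fun t ht => ?_
    have ht0 : (0:ℝ) < t := lt_trans zero_lt_one ht
    simp only [smul_eq_mul]
    rw [zff_eq, mul_sub, key3 ht0]
  have e3 : ∫ t in Set.Ioi (1:ℝ), (t:ℂ) ^ (w - 3) = -(1 / (w - 2)) := by
    have hthis := integral_Ioi_cpow_of_lt (a := w - 3)
      (by simp only [Complex.sub_re, Complex.ofReal_re]; norm_num; linarith) zero_lt_one
    rw [hthis, show w - 3 + 1 = w - 2 by ring, Complex.ofReal_one, one_cpow, neg_div]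
  have e1 : ∫ t in Set.Ioc (0:ℝ) 1, (t:ℂ) ^ (w - 1) • zff t = zAA w := by
    rw [zAA_eq]
    simp_rw [smul_eq_mul]
  rw [mellin, split_integral _ hint, e1, e2, e3]
  ring

lemma mellin_zFF_split {w : ℂ} (hw : 2 < w.re) :
    mellin zFF w = zAA w + zBB w + 1 / (w - 2) := by
  have h0 : 0 < w.re := by linarith
  have hmc : MellinConvergent zFF w :=
    mellinConvergent_of_isBigO_rpow_exp two_pos zFF_locInt zFF_isBigO_top zFF_isBigO_zero hw
  have hint : IntegrableOn (fun t : ℝ => (t:ℂ) ^ (w - 1) • zFF t) (Set.Ioi 0) := hmc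
  have hMg := hasMellin_cpow_Ioc (-2 : ℂ)
    (s := w) (by simp only [Complex.neg_re]; norm_num; linarith)
  have hIg : IntegrableOn (fun t : ℝ => (t:ℂ) ^ (w - 1) * (t:ℂ) ^ (-2:ℂ)) (Set.Ioc 0 1) :=
    (mellinConvergent_indicator_iff _ _ measurableSet_Ioc Set.Ioc_subset_Ioi_self w).mp hMg.1
  have hIg' : IntegrableOn (fun t : ℝ => (t:ℂ) ^ (w - 1) * zgg t) (Set.Ioc 0 1) := by
    refine hIg.congr ((ae_restrict_iff' measurableSet_Ioc).mpr (.of_forall fun t ht => ?_))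
    simp only [cpow_neg_two_eq ht.1]
  have hg_val : ∫ t in Set.Ioc (0:ℝ) 1, (t:ℂ) ^ (w - 1) * zgg t = 1 / (w - 2) := by
    have h1 := hMg.2
    rw [mellin_indicator_eq _ _ measurableSet_Ioc Set.Ioc_subset_Ioi_self w] at h1
    rw [show w - 2 = w + -2 by ring, ← h1]
    refine setIntegral_congr_fun measurableSet_Ioc fun t ht => ?_
    simp only [cpow_neg_two_eq ht.1]
  have h_f : IntegrableOn (fun t : ℝ => (t:ℂ) ^ (w - 1) * zff t) (Set.Ioc 0 1) := by
    have hsum := (hint.mono_set Set.Ioc_subset_Ioi_self).sub hIg'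
    refine hsum.congr ((ae_restrict_iff' measurableSet_Ioc).mpr (.of_forall fun t ht => ?_))
    simp only [Pi.sub_apply, smul_eq_mul]
    rw [zff_eq, mul_sub]
  have e1 : ∫ t in Set.Ioc (0:ℝ) 1, (t:ℂ) ^ (w - 1) • zFF t = zAA w + 1 / (w - 2) := by
    rw [zAA_eq, ← hg_val, ← integral_add h_f hIg']
    refine setIntegral_congr_fun measurableSet_Ioc fun t ht => ?_
    simp only [Pi.add_apply, smul_eq_mul]
    rw [zff_eq, mul_sub]
    ring
  have e2 : ∫ t in Set.Ioi (1:ℝ), (t:ℂ) ^ (w - 1) • zFF t = zBB w := by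
    rw [zBB_eq]
    simp_rw [smul_eq_mul]
  rw [mellin, split_integral _ hint, e1, e2]
  ring
lemma zFF_hasSum {t : ℝ} (ht : 0 < t) :
    HasSum (fun n : ℕ => ((4 * ((n:ℝ) + 1) : ℝ) : ℂ) * Real.exp (-(2 * ((n:ℝ) + 1)) * t))
      (zFF t) := by
  have hx0 : 0 < Real.exp (-2 * t) := Real.exp_pos _
  have hx1 : Real.exp (-2 * t) < 1 := by
    rw [Real.exp_lt_one_iff]
    linarith
  set x := Real.exp (-2 * t) with hx
  have hgeo : HasSum (fun n : ℕ => (n:ℝ) * x ^ n) (x / (1 - x) ^ 2) :=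
    hasSum_coe_mul_geometric_of_norm_lt_one
      (by rw [Real.norm_eq_abs, _root_.abs_of_pos hx0]; exact hx1)
  have hshift : HasSum (fun n : ℕ => ((n:ℝ) + 1) * x ^ (n + 1)) (x / (1 - x) ^ 2) := by
    have h := (hasSum_nat_add_iff' (f := fun n : ℕ => (n:ℝ) * x ^ n) 1).mpr hgeo
    simpa using h
  have hmul := hshift.mul_left 4
  have hC : HasSum (fun n : ℕ => ((4 * (((n:ℝ) + 1) * x ^ (n + 1)) : ℝ) : ℂ))
      ((4 * (x / (1 - x) ^ 2) : ℝ) : ℂ) := Complex.hasSum_ofReal.mpr hmul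
  have hs0 : 0 < Real.sinh t := (Real.sinh_pos_iff).mpr ht
  have h1x : (0:ℝ) < 1 - x := by linarith
  have hexp2 : Real.exp (-t) * Real.exp (-t) = x := by
    rw [← Real.exp_add, hx]
    congr 1
    ring
  have hkey : Real.sinh t * (2 * Real.exp (-t)) = 1 - x := by
    rw [Real.sinh_eq, ← hexp2]
    have he : Real.exp t * Real.exp (-t) = 1 := by
      rw [← Real.exp_add]
      simp
    linear_combination he
  have hsq : Real.sinh t ^ 2 * (4 * x) = (1 - x) ^ 2 := by
    linear_combination (Real.sinh t * (2 * Real.exp (-t)) + (1 - x)) * hkey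
      - 4 * Real.sinh t ^ 2 * hexp2
  have hzFF : zFF t = ((4 * (x / (1 - x) ^ 2) : ℝ) : ℂ) := by
    rw [zFF, Complex.ofReal_inj, mul_div_assoc',
      div_eq_div_iff (by positivity) (by positivity : ((1:ℝ) - x) ^ 2 ≠ 0)]
    linear_combination -hsq
  have hfun : (fun n : ℕ => ((4 * ((n:ℝ) + 1) : ℝ) : ℂ) * Real.exp (-(2 * ((n:ℝ) + 1)) * t))
      = fun n : ℕ => ((4 * (((n:ℝ) + 1) * x ^ (n + 1)) : ℝ) : ℂ) := by
    funext n
    rw [← Complex.ofReal_mul]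
    congr 1
    have harg : (-(2 * ((n:ℝ) + 1)) * t) = ((n + 1 : ℕ) : ℝ) * (-2 * t) := by
      push_cast
      ring
    rw [hx, harg, ← Real.exp_nat_mul]
    ring
  rw [hzFF, hfun]
  exact hC

lemma mellin_zFF_eq {w : ℂ} (hw : 2 < w.re) :
    mellin zFF w = 2 ^ ((2:ℂ) - w) * Complex.Gamma w * riemannZeta (w - 1) := by
  have h0 : 0 < w.re := by linarith
  have hp : ∀ n : ℕ, ((4 * ((n:ℝ) + 1) : ℝ) : ℂ) = 0 ∨ 0 < 2 * ((n:ℝ) + 1) :=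
    fun n => Or.inr (by positivity)
  have h_sum : Summable fun n : ℕ =>
      ‖((4 * ((n:ℝ) + 1) : ℝ) : ℂ)‖ / (2 * ((n:ℝ) + 1)) ^ w.re := by
    have hbase : Summable fun n : ℕ => ((n:ℝ) + 1) ^ (1 - w.re) := by
      have h1 := (Real.summable_nat_rpow (p := 1 - w.re)).mpr (by linarith)
      have h2 := (summable_nat_add_iff 1).mpr h1
      simpa using h2
    refine Summable.congr (hbase.mul_left (4 / (2:ℝ) ^ w.re)) fun n => ?_
    have hn : (0:ℝ) < (n:ℝ) + 1 := by positivity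
    have h2rw : (0:ℝ) < (2:ℝ) ^ w.re := Real.rpow_pos_of_pos two_pos _
    have hnrw : (0:ℝ) < ((n:ℝ) + 1) ^ w.re := Real.rpow_pos_of_pos hn _
    rw [Complex.norm_real, Real.norm_eq_abs, _root_.abs_of_pos (by positivity),
      Real.mul_rpow (by norm_num) hn.le, Real.rpow_sub hn, Real.rpow_one]
    field_simp
  have hF : ∀ t ∈ Set.Ioi (0:ℝ),
      HasSum (fun n : ℕ => ((4 * ((n:ℝ) + 1) : ℝ) : ℂ) * Real.exp (-(2 * ((n:ℝ) + 1)) * t))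
        (zFF t) := fun t ht => zFF_hasSum ht
  have hmain := hasSum_mellin hp h0 hF h_sum
  have h22 : (2:ℂ) ^ (2:ℂ) = 4 := by norm_num
  have hterm : ∀ n : ℕ,
      Complex.Gamma w * ((4 * ((n:ℝ) + 1) : ℝ) : ℂ) / ((2 * ((n:ℝ) + 1) : ℝ) : ℂ) ^ w
        = 2 ^ ((2:ℂ) - w) * Complex.Gamma w * (1 / ((n:ℂ) + 1) ^ (w - 1)) := by
    intro n
    have hn0 : ((n:ℂ) + 1) ≠ 0 := by
      exact_mod_cast Nat.succ_ne_zero n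
    have h2 : ((2 * ((n:ℝ) + 1) : ℝ) : ℂ) = ((2:ℝ) : ℂ) * (((n:ℝ) + 1 : ℝ) : ℂ) := by
      push_cast
      ring
    rw [h2, mul_cpow_ofReal_nonneg (by norm_num) (by positivity)]
    have hc1 : (((n:ℝ) + 1 : ℝ) : ℂ) = (n:ℂ) + 1 := by push_cast; ring
    have h2c : ((2:ℝ) : ℂ) = (2:ℂ) := by norm_num
    rw [hc1, h2c]
    have hA : (2:ℂ) ^ ((2:ℂ) - w) = 4 / (2:ℂ) ^ w := by
      rw [cpow_sub _ _ two_ne_zero, h22]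
    have hB : ((n:ℂ) + 1) ^ (w - 1) = ((n:ℂ) + 1) ^ w / ((n:ℂ) + 1) := by
      rw [cpow_sub _ _ hn0, cpow_one]
    have hw0' : (2:ℂ) ^ w ≠ 0 := fun h =>
      two_ne_zero ((cpow_eq_zero_iff _ _).mp h).1
    have hnw : ((n:ℂ) + 1) ^ w ≠ 0 := fun h => hn0 ((cpow_eq_zero_iff _ _).mp h).1
    have hcast : ((4 * ((n:ℝ) + 1) : ℝ) : ℂ) = 4 * ((n:ℂ) + 1) := by push_cast; ring
    rw [hcast, hA, hB]
    field_simp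
  rw [← hmain.tsum_eq, tsum_congr hterm, tsum_mul_left,
    zeta_eq_tsum_one_div_nat_add_one_cpow
      (by simp only [Complex.sub_re, Complex.one_re]; linarith)]
noncomputable def zZZ (s : ℂ) : ℂ :=
  (s - 1) * (riemannZeta s - 1 / (s - 1) / Gammaℝ s) + (Gammaℝ s)⁻¹

noncomputable def zH (w : ℂ) : ℂ := (w - 2) * (zAA w + zBB w) + 1
noncomputable def zPhi (w : ℂ) : ℂ := 2 ^ ((2:ℂ) - w) * Complex.Gamma w * zZZ (w - 1)

lemma zZZ_eq {s : ℂ} (hs : s ≠ 1) : zZZ s = (s - 1) * riemannZeta s := by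
  have h1 : s - 1 ≠ 0 := sub_ne_zero.mpr hs
  rw [zZZ, mul_sub]
  have h2 : (s - 1) * (1 / (s - 1) / Gammaℝ s) = (Gammaℝ s)⁻¹ := by
    rw [div_div, one_div, mul_inv, ← mul_assoc, mul_inv_cancel₀ h1, one_mul]
  rw [h2]
  ring

lemma zZZ_diff : Differentiable ℂ zZZ := by
  intro s
  by_cases hs : s = 1
  · subst hs
    apply DifferentiableAt.add
    · exact (differentiableAt_id.sub (differentiableAt_const 1)).mul
        (HurwitzZeta.differentiableAt_hurwitzZetaEven_sub_one_div 0)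
    · exact differentiable_Gammaℝ_inv.differentiableAt
  · have h1 : s - 1 ≠ 0 := sub_ne_zero.mpr hs
    apply DifferentiableAt.add
    · apply DifferentiableAt.mul (differentiableAt_id.sub (differentiableAt_const 1))
      apply DifferentiableAt.sub (differentiableAt_riemannZeta hs)
      have he : (fun s : ℂ => 1 / (s - 1) / Gammaℝ s)
          = fun s : ℂ => (1 / (s - 1)) * (Gammaℝ s)⁻¹ := by
        funext x
        rw [div_eq_mul_inv]
      rw [he]
      have hd1 : DifferentiableAt ℂ (fun x : ℂ => 1 / (x - 1)) s :=
        (differentiableAt_const 1).div (differentiableAt_id.sub (differentiableAt_const 1)) h1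
      exact hd1.mul differentiable_Gammaℝ_inv.differentiableAt
    · exact differentiable_Gammaℝ_inv.differentiableAt

lemma zAA_diff {w : ℂ} (h0 : 0 < w.re) : DifferentiableAt ℂ zAA w :=
  mellin_differentiableAt_of_isBigO_rpow f1_int.locallyIntegrableOn
    (f1_isBigO_top (w.re + 1)) (lt_add_one _) f1_isBigO_zero h0

lemma zBB_diff {w : ℂ} (h0 : 0 < w.re) : DifferentiableAt ℂ zBB w :=
  mellin_differentiableAt_of_isBigO_rpow_exp two_pos F2_int.locallyIntegrableOn
    F2_isBigO_top F2_isBigO_zero h0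

lemma Gamma_diffAt {w : ℂ} (h0 : 0 < w.re) : DifferentiableAt ℂ Complex.Gamma w := by
  apply Complex.differentiableAt_Gamma
  intro m hm
  rw [hm] at h0
  simp only [Complex.neg_re, Complex.natCast_re] at h0
  exact (neg_nonpos.mpr (Nat.cast_nonneg m)).not_gt h0

lemma zH_diffAt {w : ℂ} (h0 : 0 < w.re) : DifferentiableAt ℂ zH w := by
  unfold zH
  exact ((differentiableAt_id.sub (differentiableAt_const 2)).mul
    ((zAA_diff h0).add (zBB_diff h0))).add (differentiableAt_const 1)

lemma zPhi_diffAt {w : ℂ} (h0 : 0 < w.re) : DifferentiableAt ℂ zPhi w := by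
  unfold zPhi
  refine DifferentiableAt.mul (DifferentiableAt.mul ?_ (Gamma_diffAt h0)) ?_
  · exact ((differentiableAt_const (2:ℂ)).sub differentiableAt_id).const_cpow
      (Or.inl two_ne_zero)
  · exact (zZZ_diff (w - 1)).comp w (differentiableAt_id.sub (differentiableAt_const 1))

lemma zH_eq_zPhi_right {w : ℂ} (hw : 2 < w.re) : zH w = zPhi w := by
  have hw2 : w - 2 ≠ 0 := by
    intro h
    rw [sub_eq_zero] at h
    rw [h] at hw
    simp at hw
  have hw1 : w - 1 ≠ 1 := by
    intro h
    apply hw2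
    linear_combination h
  have hsplit := mellin_zFF_split hw
  have hval := mellin_zFF_eq hw
  rw [zH, zPhi, zZZ_eq hw1]
  have hAB : zAA w + zBB w = mellin zFF w - 1 / (w - 2) := by
    rw [hsplit]
    ring
  rw [hAB, hval]
  field_simp
  ring

lemma zH_eq_zPhi : Set.EqOn zH zPhi {w : ℂ | 0 < w.re} := by
  have hopen : IsOpen {w : ℂ | 0 < w.re} := isOpen_lt continuous_const Complex.continuous_re
  have hopen2 : IsOpen {w : ℂ | 2 < w.re} := isOpen_lt continuous_const Complex.continuous_re
  have hH : AnalyticOnNhd ℂ zH {w : ℂ | 0 < w.re} :=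
    DifferentiableOn.analyticOnNhd
      (fun w hw => (zH_diffAt hw).differentiableWithinAt) hopen
  have hPhi : AnalyticOnNhd ℂ zPhi {w : ℂ | 0 < w.re} :=
    DifferentiableOn.analyticOnNhd
      (fun w hw => (zPhi_diffAt hw).differentiableWithinAt) hopen
  have h3 : (3:ℂ) ∈ {w : ℂ | 2 < w.re} := by
    simp only [Set.mem_setOf_eq]
    norm_num
  have hev : zH =ᶠ[nhds (3:ℂ)] zPhi :=
    Filter.eventually_of_mem (hopen2.mem_nhds h3) (fun w hw => zH_eq_zPhi_right hw)
  exact hH.eqOn_of_preconnected_of_eventuallyEq hPhi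
    (convex_halfSpace_re_gt 0).isPreconnected
    (by simp only [Set.mem_setOf_eq]; norm_num) hev

lemma mellin_zff_eq {w : ℂ} (h0 : 0 < w.re) (h2 : w.re < 2) :
    mellin zff w = 2 ^ ((2:ℂ) - w) * Complex.Gamma w * riemannZeta (w - 1) := by
  have hw2 : w - 2 ≠ 0 := by
    intro h
    rw [sub_eq_zero] at h
    rw [h] at h2
    simp at h2
  have hw1 : w - 1 ≠ 1 := by
    intro h
    apply hw2
    linear_combination h
  have hH := zH_eq_zPhi (show w ∈ {w : ℂ | 0 < w.re} from h0)
  rw [zH, zPhi, zZZ_eq hw1] at hH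
  rw [mellin_zff_split h0 h2]
  have key : (zAA w + zBB w + 1 / (w - 2)) * (w - 2)
      = (2 ^ ((2:ℂ) - w) * Complex.Gamma w * riemannZeta (w - 1)) * (w - 2) := by
    field_simp
    linear_combination hH
  exact mul_right_cancel₀ hw2 key
theorem zeta_sinh_sq_critical_strip (s : ℂ) (h0 : 0 < s.re) (h2 : s.re < 2) (hs1 : s ≠ 1) :
    riemannZeta s =
      -((Real.pi : ℂ) ^ (s - 1) * Complex.sin ((Real.pi : ℂ) * s / 2) / (s - 1)) *
        ∫ t in Set.Ioi (0 : ℝ),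
          (t : ℂ) ^ (1 - s) * ((1 / (Real.sinh t) ^ 2 - 1 / t ^ 2 : ℝ) : ℂ) := by
  have h1 : s - 1 ≠ 0 := sub_ne_zero.mpr hs1
  set w : ℂ := 2 - s with hw
  have hw0 : 0 < w.re := by
    rw [hw]
    simp only [Complex.sub_re]; norm_num
    linarith
  have hw2 : w.re < 2 := by
    rw [hw]
    simp only [Complex.sub_re]; norm_num
    linarith
  have hmel := mellin_zff_eq hw0 hw2
  have hint_eq : (∫ t in Set.Ioi (0 : ℝ),
      (t : ℂ) ^ (1 - s) * ((1 / (Real.sinh t) ^ 2 - 1 / t ^ 2 : ℝ) : ℂ)) = mellin zff w := by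
    rw [mellin]
    refine setIntegral_congr_fun measurableSet_Ioi fun t ht => ?_
    rw [smul_eq_mul, zff, show w - 1 = 1 - s by rw [hw]; ring]
  rw [hint_eq, hmel, show (2:ℂ) - w = s by rw [hw]; ring,
    show w - 1 = 1 - s by rw [hw]; ring, show w = 2 - s from hw]
  have hfe := riemannZeta_one_sub (s := 1 - s) ?_ ?_
  · rw [show (1:ℂ) - (1 - s) = s by ring] at hfe
    rw [hfe]
    have hG : Complex.Gamma (2 - s) = (1 - s) * Complex.Gamma (1 - s) := by
      have hg := Complex.Gamma_add_one (s := 1 - s)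
        (by intro h; apply h1; linear_combination -h)
      rw [show (1:ℂ) - s + 1 = 2 - s by ring] at hg
      exact hg
    rw [hG]
    have hcos : Complex.cos (↑Real.pi * (1 - s) / 2) = Complex.sin (↑Real.pi * s / 2) := by
      rw [show (↑Real.pi * (1 - s) / 2 : ℂ) = ↑Real.pi / 2 - ↑Real.pi * s / 2 by ring,
        Complex.cos_pi_div_two_sub]
    rw [hcos]
    have hpow : ((2:ℂ) * ↑Real.pi) ^ (-(1 - s)) = (2:ℂ) ^ (s - 1) * (↑Real.pi : ℂ) ^ (s - 1) := by
      rw [show (-(1 - s) : ℂ) = s - 1 by ring,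
        show ((2:ℂ) * ↑Real.pi) = (((2:ℝ):ℂ) * ((Real.pi : ℝ):ℂ)) by norm_num,
        mul_cpow_ofReal_nonneg (by norm_num) Real.pi_pos.le]
      norm_num
    rw [hpow]
    have h2s : (2:ℂ) * (2:ℂ) ^ (s - 1) = (2:ℂ) ^ s := by
      have hc := cpow_add 1 (s - 1) (two_ne_zero' ℂ)
      rw [show (1:ℂ) + (s - 1) = s by ring] at hc
      rw [hc, cpow_one]
    rw [← h2s]
    field_simp
    ring
  · intro n hn
    have hs_eq : s = 1 + (n:ℂ) := by linear_combination -hn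
    rcases Nat.eq_zero_or_pos n with hn0 | hn0
    · apply hs1
      rw [hs_eq, hn0]
      norm_num
    · rw [hs_eq] at h2
      simp only [Complex.add_re, Complex.one_re, Complex.natCast_re] at h2
      have hn1 : (1:ℝ) ≤ (n:ℝ) := by exact_mod_cast hn0
      linarith
  · intro h
    have hs0 : s = 0 := by linear_combination -h
    rw [hs0] at h0
    simp at h0
end

section
/- For every positive integer n, ζ(2n) = −(1/2) · [∑_{k=1}^{n} (−1)^{k} · π^{2k} · (2n − 2k − 1) · ζ(2n − 2k) / (2k+1)!] / (2^{−2n} + n − 1). -/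
open PowerSeries Finset

namespace ZetaRecAux

noncomputable def B : ℚ⟦X⟧ := bernoulliPowerSeries ℚ
noncomputable def Ex : ℚ⟦X⟧ := PowerSeries.exp ℚ
noncomputable def D : ℚ⟦X⟧ := PowerSeries.rescale 2 B

lemma hB : B * (Ex - 1) = X := bernoulliPowerSeries_mul_exp_sub_one ℚ

lemma coeff_B (n : ℕ) : (coeff n) B = bernoulli n / n.factorial := by
  simp [B, bernoulliPowerSeries, coeff_mk]

lemma coeff_D (n : ℕ) : (coeff n) D = 2 ^ n * (bernoulli n / n.factorial) := by
  simp [D, coeff_rescale, coeff_B]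

lemma coeff_Ex (n : ℕ) : (coeff n) Ex = 1 / n.factorial := by
  simp [Ex, coeff_exp]

lemma hEsq : Ex * Ex = PowerSeries.rescale 2 Ex := by
  have h := PowerSeries.exp_mul_exp_eq_exp_add (1 : ℚ) 1
  rw [rescale_one] at h
  norm_num at h
  simpa [Ex] using h

lemma rescale_two_X : PowerSeries.rescale (2 : ℚ) X = 2 * X := by
  ext n
  rw [coeff_rescale, coeff_X, (map_ofNat (PowerSeries.C (R := ℚ)) 2).symm, coeff_C_mul,
    coeff_X]
  split_ifs with h <;> simp [h]

lemma hD : D * (PowerSeries.rescale 2 Ex - 1) = 2 * X := by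
  have h := congrArg (PowerSeries.rescale (2 : ℚ)) hB
  rw [map_mul, map_sub, map_one, rescale_two_X] at h
  exact h

end ZetaRecAux

namespace ZetaRecAux

lemma two_ne : (2 : ℚ⟦X⟧) ≠ 0 := by
  intro h
  have := congrArg (constantCoeff) h
  rw [map_ofNat, map_zero] at this
  norm_num at this

lemma hdEx : d⁄dX ℚ Ex = Ex := by
  ext n
  rw [PowerSeries.coeff_derivative, coeff_Ex, coeff_Ex, Nat.factorial_succ]
  have h1 : ((n : ℚ) + 1) ≠ 0 := by positivity
  have h2 : ((n.factorial : ℚ)) ≠ 0 := by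
    exact_mod_cast n.factorial_ne_zero
  push_cast
  field_simp

lemma deriv_rescale (a : ℚ) (f : ℚ⟦X⟧) :
    d⁄dX ℚ (PowerSeries.rescale a f) = PowerSeries.C a * PowerSeries.rescale a (d⁄dX ℚ f) := by
  ext n
  rw [PowerSeries.coeff_derivative, coeff_rescale, coeff_C_mul, coeff_rescale,
    PowerSeries.coeff_derivative, pow_succ]
  ring

lemma hdD' : X * d⁄dX ℚ D = D - D * D * PowerSeries.rescale 2 Ex := by
  have h1 := congrArg (d⁄dX ℚ) hD
  rw [Derivation.leibniz, map_sub, Derivation.map_one_eq_zero, deriv_rescale, hdEx] at h1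
  rw [show (2 : ℚ⟦X⟧) * X = X + X by ring, map_add, PowerSeries.derivative_X] at h1
  simp only [smul_eq_mul, sub_zero, map_ofNat] at h1
  apply mul_left_cancel₀ two_ne
  linear_combination D * h1 - (d⁄dX ℚ D) * hD

lemma hE : D * Ex = 2 * B - D := by
  have hne : Ex - 1 ≠ 0 := by
    intro h
    have := congrArg (coeff 1) h
    rw [map_sub, coeff_Ex] at this
    simp at this
  apply mul_right_cancel₀ hne
  linear_combination D * hEsq + hD - 2 * hB

lemma hneg : Ex * PowerSeries.rescale (-1) Ex = 1 := by
  have h := PowerSeries.exp_mul_exp_eq_exp_add (1 : ℚ) (-1)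
  rw [rescale_one] at h
  norm_num at h
  simpa [Ex] using h

lemma hm : (D * Ex) * (Ex - PowerSeries.rescale (-1) Ex) = 2 * X := by
  linear_combination D * hEsq + (-D) * hneg + hD

lemma main : (X * d⁄dX ℚ D - D) * (Ex - PowerSeries.rescale (-1) Ex)
    = -(2 * X) * (D * Ex) := by
  linear_combination (Ex - PowerSeries.rescale (-1) Ex) * hdD'
    + D * D * (Ex - PowerSeries.rescale (-1) Ex) * hEsq + (-(D * Ex)) * hm

end ZetaRecAux

namespace ZetaRecAux

lemma coeff_X_mul_deriv (f : ℚ⟦X⟧) (i : ℕ) :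
    coeff i (X * d⁄dX ℚ f) = (i : ℚ) * coeff i f := by
  cases i with
  | zero => simp
  | succ i =>
    rw [PowerSeries.coeff_succ_X_mul, PowerSeries.coeff_derivative]
    push_cast
    ring

lemma coeff_G (i : ℕ) :
    coeff i (X * d⁄dX ℚ D - D) = ((i : ℚ) - 1) * (2 ^ i * (bernoulli i / i.factorial)) := by
  rw [map_sub, coeff_X_mul_deriv, coeff_D]
  ring

lemma coeff_Sh (j : ℕ) :
    coeff j (Ex - PowerSeries.rescale (-1) Ex) = (1 - (-1 : ℚ) ^ j) * (1 / j.factorial) := by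
  rw [map_sub, coeff_rescale, coeff_Ex]
  ring

lemma sum_pair (f : ℕ → ℚ) (n : ℕ) :
    ∑ i ∈ Finset.range (2 * n), f i = ∑ k ∈ Finset.range n, (f (2 * k) + f (2 * k + 1)) := by
  induction n with
  | zero => simp
  | succ n ih =>
    rw [Finset.sum_range_succ, show 2 * (n + 1) = 2 * n + 1 + 1 by ring,
      Finset.sum_range_succ, Finset.sum_range_succ, ih]
    ring

end ZetaRecAux

namespace ZetaRecAux

lemma hC2 : (2 : ℚ⟦X⟧) = PowerSeries.C 2 := (map_ofNat _ 2).symm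

lemma keyQ (n : ℕ) :
    ∑ k ∈ Finset.range (n + 1),
      (2 * (n : ℚ) - 2 * k - 1) * 2 ^ (2 * (n - k)) * bernoulli (2 * (n - k)) /
        ((2 * (n - k)).factorial * (2 * k + 1).factorial)
    = (2 ^ (2 * n) - 2) * bernoulli (2 * n) / (2 * n).factorial := by
  have h := congrArg (coeff (2 * n + 1)) main
  rw [PowerSeries.coeff_mul, Finset.Nat.sum_antidiagonal_eq_sum_range_succ_mk,
    show (2 * n + 1).succ = 2 * (n + 1) by omega, sum_pair] at h
  rw [show -(2 * X) * (D * Ex) = PowerSeries.C (-2) * (X * (2 * B - D)) by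
        rw [hE, map_neg, ← hC2]; ring,
    coeff_C_mul, PowerSeries.coeff_succ_X_mul, map_sub, hC2, coeff_C_mul, coeff_B, coeff_D]
    at h
  rw [← Finset.sum_range_reflect] at h
  have h2 : ∑ k ∈ Finset.range (n + 1), 2 *
      ((2 * (n : ℚ) - 2 * k - 1) * 2 ^ (2 * (n - k)) * bernoulli (2 * (n - k)) /
        ((2 * (n - k)).factorial * (2 * k + 1).factorial))
      = -2 * (2 * (bernoulli (2 * n) / (2 * n).factorial)
          - 2 ^ (2 * n) * (bernoulli (2 * n) / (2 * n).factorial)) := by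
    rw [← h]
    apply Finset.sum_congr rfl
    intro k hk
    have hk' : k ≤ n := Finset.mem_range_succ_iff.mp hk
    have e1 : n + 1 - 1 - k = n - k := by omega
    have e2 : 2 * n + 1 - 2 * (n - k) = 2 * k + 1 := by omega
    have e3 : 2 * n + 1 - (2 * (n - k) + 1) = 2 * k := by omega
    rw [e1, e2, e3, coeff_G, coeff_G, coeff_Sh, coeff_Sh]
    have o1 : (-1 : ℚ) ^ (2 * k + 1) = -1 := by
      rw [pow_succ, pow_mul]; norm_num
    have o2 : (-1 : ℚ) ^ (2 * k) = 1 := by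
      rw [pow_mul]; norm_num
    rw [o1, o2]
    have c1 : ((2 * (n - k) : ℕ) : ℚ) = 2 * (n : ℚ) - 2 * k := by
      push_cast [Nat.cast_sub hk']; ring
    have f1 : ((2 * (n - k)).factorial : ℚ) ≠ 0 := by exact_mod_cast (2 * (n - k)).factorial_ne_zero
    have f2 : (((2 * k + 1)).factorial : ℚ) ≠ 0 := by exact_mod_cast (2 * k + 1).factorial_ne_zero
    rw [c1]
    field_simp
    ring
  rw [← Finset.mul_sum] at h2
  have hfin : ((2 * n).factorial : ℚ) ≠ 0 := by exact_mod_cast (2 * n).factorial_ne_zero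
  field_simp at h2 ⊢
  linarith

end ZetaRecAux

namespace ZetaRecAux

open Real

lemma zetaval (m : ℕ) :
    riemannZeta (2 * (m : ℂ)) = (-1) ^ (m + 1) * 2 ^ (2 * m) * (Real.pi : ℂ) ^ (2 * m) *
      (bernoulli (2 * m) : ℂ) / (2 * ((2 * m).factorial : ℂ)) := by
  cases m with
  | zero => norm_num [riemannZeta_zero]
  | succ m =>
    rw [riemannZeta_two_mul_nat (Nat.succ_ne_zero m)]
    rw [show 2 * (m + 1) - 1 = 2 * m + 1 by omega]
    have h2 : (2 : ℂ) ^ (2 * (m + 1)) = 2 * 2 ^ (2 * m + 1) := by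
      rw [show 2 * (m + 1) = (2 * m + 1) + 1 by omega, pow_succ]; ring
    have hf : (((2 * (m + 1)).factorial : ℂ)) ≠ 0 := by
      exact_mod_cast (2 * (m + 1)).factorial_ne_zero
    rw [h2]
    field_simp

end ZetaRecAux

namespace ZetaRecAux

lemma keyC (n : ℕ) :
    ∑ k ∈ Finset.Icc 1 n,
      (2 * (n : ℂ) - 2 * k - 1) * 2 ^ (2 * (n - k)) * (bernoulli (2 * (n - k)) : ℂ) /
        (((2 * (n - k)).factorial : ℂ) * ((2 * k + 1).factorial : ℂ))
    = (2 ^ (2 * n) - 2) * (bernoulli (2 * n) : ℂ) / ((2 * n).factorial : ℂ)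
      - (2 * (n : ℂ) - 1) * 2 ^ (2 * n) * (bernoulli (2 * n) : ℂ) / ((2 * n).factorial : ℂ) := by
  have hc := congrArg (fun q : ℚ => (q : ℂ)) (keyQ n)
  push_cast at hc
  rw [show Finset.range (n+1) = insert 0 (Finset.Icc 1 n) by
        ext x; simp [Finset.mem_range, Finset.mem_Icc]; omega,
      Finset.sum_insert (by simp)] at hc
  norm_num at hc
  linear_combination hc

end ZetaRecAux

theorem zeta_even_recursion_a (n : ℕ) (hn : 0 < n) :
    riemannZeta (2 * n) = -(1 / 2) *
      (∑ k ∈ Finset.Icc 1 n,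
          (-1 : ℂ) ^ k * (Real.pi : ℂ) ^ (2 * k) * (2 * (n : ℂ) - 2 * (k : ℂ) - 1) *
            riemannZeta (2 * (n : ℂ) - 2 * (k : ℂ)) / ((2 * k + 1).factorial : ℂ)) /
        ((2 : ℂ) ^ (-(2 * (n : ℂ))) + (n : ℂ) - 1) := by
  have hA : ((2:ℂ) ^ (2*n)) ≠ 0 := pow_ne_zero _ two_ne_zero
  have hpow : (2:ℂ) ^ (-(2 * (n:ℂ))) = ((2:ℂ) ^ (2*n))⁻¹ := by
    rw [show -(2 * (n:ℂ)) = -(((2*n : ℕ) : ℂ)) by push_cast; ring,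
      Complex.cpow_neg, Complex.cpow_natCast]
  have hcast : (n : ℂ) - 1 = ((n - 1 : ℕ) : ℂ) := by
    push_cast [Nat.cast_sub hn]; ring
  have hnum : (1:ℂ) + ((n:ℂ) - 1) * 2 ^ (2*n) ≠ 0 := by
    rw [hcast, show (1:ℂ) + ((n-1:ℕ):ℂ) * 2^(2*n) = ((1 + (n-1) * 2^(2*n) : ℕ) : ℂ) by
      push_cast; ring]
    exact Nat.cast_ne_zero.mpr (by positivity)
  have hden : (2:ℂ) ^ (-(2*(n:ℂ))) + (n:ℂ) - 1 ≠ 0 := by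
    rw [hpow]
    have key2 : ((2:ℂ)^(2*n))⁻¹ + (n:ℂ) - 1 = (1 + ((n:ℂ)-1) * 2^(2*n)) / 2^(2*n) := by
      field_simp; ring
    rw [key2]
    exact div_ne_zero hnum hA
  have hsum : (∑ k ∈ Finset.Icc 1 n,
      (-1 : ℂ) ^ k * (Real.pi : ℂ) ^ (2 * k) * (2 * (n : ℂ) - 2 * (k : ℂ) - 1) *
        riemannZeta (2 * (n : ℂ) - 2 * (k : ℂ)) / ((2 * k + 1).factorial : ℂ))
      = ((-1:ℂ)^(n+1) * (Real.pi:ℂ)^(2*n) / 2) *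
        ∑ k ∈ Finset.Icc 1 n,
          (2 * (n : ℂ) - 2 * k - 1) * 2 ^ (2 * (n - k)) * (bernoulli (2 * (n - k)) : ℂ) /
            (((2 * (n - k)).factorial : ℂ) * ((2 * k + 1).factorial : ℂ)) := by
    rw [Finset.mul_sum]
    apply Finset.sum_congr rfl
    intro k hk
    obtain ⟨hk1, hk2⟩ := Finset.mem_Icc.mp hk
    have hz : 2*(n:ℂ) - 2*(k:ℂ) = 2 * (((n - k : ℕ)) : ℂ) := by
      push_cast [Nat.cast_sub hk2]; ring
    rw [hz, ZetaRecAux.zetaval (n - k)]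
    have hsign : (-1:ℂ)^(n+1) = (-1:ℂ)^k * (-1:ℂ)^((n-k)+1) := by
      rw [← pow_add, show k + ((n-k)+1) = n+1 by omega]
    have hpi : (Real.pi:ℂ)^(2*n) = (Real.pi:ℂ)^(2*k) * (Real.pi:ℂ)^(2*(n-k)) := by
      rw [← pow_add, show 2*k + 2*(n-k) = 2*n by omega]
    rw [hsign, hpi]
    have f1 : (((2*(n-k)).factorial : ℂ)) ≠ 0 := by
      exact_mod_cast (2*(n-k)).factorial_ne_zero
    have f2 : (((2*k+1).factorial : ℂ)) ≠ 0 := by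
      exact_mod_cast (2*k+1).factorial_ne_zero
    field_simp
  rw [hsum, ZetaRecAux.keyC n, ZetaRecAux.zetaval n, hpow]
  have hf : ((2*n).factorial : ℂ) ≠ 0 := by exact_mod_cast (2*n).factorial_ne_zero
  have key2 : ((2:ℂ)^(2*n))⁻¹ + (n:ℂ) - 1 = (1 + ((n:ℂ)-1) * 2^(2*n)) / 2^(2*n) := by
    field_simp; ring
  rw [key2]
  have hnum' : (1:ℂ) + (n:ℂ) * 2^(2*n) - 2^(2*n) ≠ 0 := by convert hnum using 1; ring
  field_simp
  linear_combination (-((bernoulli (2*n) : ℂ) * 2)) * mul_inv_cancel₀ hnum'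
end

section
/- For every positive integer n, ζ(2n) = [1 / (2(2^{−2n} − 1))] · ∑_{k=1}^{n} (−π²)^{k} · (1 − 2^{1 − 2n + 2k}) · ζ(2n − 2k) / (2k)!. -/
open PowerSeries Finset

private lemma key_ps : (PowerSeries.exp ℚ + 1) * PowerSeries.rescale (2:ℚ) (bernoulliPowerSeries ℚ)
    = 2 * bernoulliPowerSeries ℚ := by
  have h := bernoulliPowerSeries_mul_exp_sub_one ℚ
  have h2 := congrArg (PowerSeries.rescale (2:ℚ)) h
  have hre : (PowerSeries.rescale (2:ℚ)) (PowerSeries.exp ℚ) = PowerSeries.exp ℚ ^ 2 := by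
    rw [exp_pow_eq_rescale_exp]; norm_num
  rw [map_mul, map_sub, map_one, hre, rescale_X] at h2
  have hne : PowerSeries.exp ℚ - 1 ≠ 0 := by
    intro hc
    have := congrArg (PowerSeries.coeff 1) hc
    simp [PowerSeries.coeff_exp] at this
  apply mul_right_cancel₀ hne
  have : (PowerSeries.exp ℚ + 1) * PowerSeries.rescale (2:ℚ) (bernoulliPowerSeries ℚ) *
      (PowerSeries.exp ℚ - 1)
      = PowerSeries.rescale (2:ℚ) (bernoulliPowerSeries ℚ) * (PowerSeries.exp ℚ ^ 2 - 1) := by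
    ring
  rw [this, h2]
  rw [show (2 : ℚ⟦X⟧) * bernoulliPowerSeries ℚ * (PowerSeries.exp ℚ - 1)
      = 2 * (bernoulliPowerSeries ℚ * (PowerSeries.exp ℚ - 1)) by ring, h]
  rw [show PowerSeries.C (2:ℚ) * PowerSeries.X = 2 * PowerSeries.X by
    rw [map_ofNat]]

private lemma I2 (m : ℕ) : ∑ j ∈ range (m+1),
    (1 / j.factorial) * ((2:ℚ)^(m-j) * bernoulli (m-j) / (m-j).factorial)
    = (2 - 2^m) * bernoulli m / m.factorial := by
  have hc := congrArg (PowerSeries.coeff m) key_ps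
  rw [add_mul, one_mul, map_add, PowerSeries.coeff_mul,
    Finset.Nat.sum_antidiagonal_eq_sum_range_succ_mk] at hc
  simp only [PowerSeries.coeff_exp, PowerSeries.coeff_rescale, bernoulliPowerSeries,
    PowerSeries.coeff_mk, Algebra.algebraMap_self, RingHom.id_apply] at hc
  rw [show (2 : ℚ⟦X⟧) * PowerSeries.mk (fun n => bernoulli n / ↑n.factorial)
      = PowerSeries.C (2:ℚ) * PowerSeries.mk (fun n => bernoulli n / ↑n.factorial) by
        rw [map_ofNat], PowerSeries.coeff_C_mul, PowerSeries.coeff_mk] at hc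
  have hsum : ∑ j ∈ range (m+1),
      (1 / j.factorial) * ((2:ℚ)^(m-j) * bernoulli (m-j) / (m-j).factorial)
      = ∑ x ∈ range m.succ,
        1 / (x.factorial : ℚ) * (2^(m-x) * (bernoulli (m-x) / (m-x).factorial)) :=
    Finset.sum_congr rfl fun j _ => by ring
  rw [hsum]
  linear_combination hc

private lemma I1 (m : ℕ) (hm : m ≠ 1) : ∑ j ∈ range (m+1),
    (1 / j.factorial) * ((bernoulli (m-j) : ℚ) / (m-j).factorial)
    = bernoulli m / m.factorial := by
  have h := bernoulliPowerSeries_mul_exp_sub_one ℚ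
  have h2 : PowerSeries.exp ℚ * bernoulliPowerSeries ℚ = bernoulliPowerSeries ℚ + PowerSeries.X := by
    linear_combination h
  have hc := congrArg (PowerSeries.coeff m) h2
  rw [PowerSeries.coeff_mul, Finset.Nat.sum_antidiagonal_eq_sum_range_succ_mk, map_add,
    PowerSeries.coeff_X, if_neg hm, add_zero] at hc
  simp only [PowerSeries.coeff_exp, bernoulliPowerSeries, PowerSeries.coeff_mk,
    Algebra.algebraMap_self, RingHom.id_apply] at hc
  rw [Finset.sum_congr rfl (fun j _ => by ring : ∀ j ∈ range (m+1),
    (1 / (j.factorial : ℚ)) * ((bernoulli (m-j) : ℚ) / (m-j).factorial)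
    = 1 / (j.factorial : ℚ) * (bernoulli (m-j) / (m-j).factorial))]
  exact hc

private def fq (n j : ℕ) : ℚ :=
  ((2:ℚ)^j/2 - 1) * bernoulli j / (j.factorial * (2*n-j).factorial)

private lemma sum_even_aux (f : ℕ → ℚ) (hf : ∀ j, Odd j → f j = 0) (m : ℕ) :
    ∑ j ∈ range (2*m+1), f j = ∑ i ∈ range (m+1), f (2*i) := by
  induction m with
  | zero => simp
  | succ m ih =>
    rw [show 2*(m+1)+1 = (2*m+1)+1+1 by ring, Finset.sum_range_succ, Finset.sum_range_succ,
      ih, hf (2*m+1) ⟨m, by ring⟩, add_zero, Finset.sum_range_succ (fun i => f (2*i)) (m+1),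
      show 2*(m+1) = 2*m+1+1 by ring]

private lemma fq_odd (n : ℕ) : ∀ j, Odd j → fq n j = 0 := by
  intro j hj
  rcases eq_or_ne j 1 with rfl | hj1
  · simp [fq]
  · rw [fq, bernoulli_eq_bernoulli'_of_ne_one hj1,
      bernoulli'_eq_zero_of_odd hj (by rcases hj with ⟨m, rfl⟩; omega), mul_zero, zero_div]

private lemma keyQ (n : ℕ) (hn : 0 < n) :
    ∑ k ∈ Finset.Icc 1 n, ((2:ℚ)^(2*(n-k))/2 - 1) * bernoulli (2*(n-k)) /
      ((2*k).factorial * (2*(n-k)).factorial)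
    = (1 - 2^(2*n)) * bernoulli (2*n) / (2*n).factorial := by
  -- step 1: rewrite LHS as sum over range n of fq n (2*i)
  have hstep1 : ∑ k ∈ Finset.Icc 1 n, ((2:ℚ)^(2*(n-k))/2 - 1) * bernoulli (2*(n-k)) /
      ((2*k).factorial * (2*(n-k)).factorial) = ∑ i ∈ range n, fq n (2*i) := by
    rw [← Finset.Ico_add_one_right_eq_Icc, Finset.sum_Ico_eq_sum_range,
      show n + 1 - 1 = n from rfl, ← Finset.sum_range_reflect (fun j => fq n (2*j)) n]
    refine Finset.sum_congr rfl fun i hi => ?_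
    rw [Finset.mem_range] at hi
    rw [fq, show n - (1+i) = n-1-i by omega, show 2*n - 2*(n-1-i) = 2*(1+i) by omega]
    ring
  rw [hstep1]
  have hstep3 : ∑ i ∈ range n, fq n (2*i) = (∑ j ∈ range (2*n+1), fq n j) - fq n (2*n) := by
    rw [sum_even_aux (fq n) (fq_odd n) n, Finset.sum_range_succ]; ring
  rw [hstep3]
  have hsplit : ∑ j ∈ range (2*n+1), fq n j
      = (1/2) * (∑ j ∈ range (2*n+1),
          (1 / j.factorial) * ((2:ℚ)^(2*n-j) * bernoulli (2*n-j) / (2*n-j).factorial))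
        - ∑ j ∈ range (2*n+1),
          (1 / j.factorial) * ((bernoulli (2*n-j) : ℚ) / (2*n-j).factorial) := by
    rw [← Finset.sum_range_reflect (fq n) (2*n+1), Finset.mul_sum, ← Finset.sum_sub_distrib]
    refine Finset.sum_congr rfl fun j hj => ?_
    rw [Finset.mem_range] at hj
    rw [show 2*n+1-1-j = 2*n-j by omega, fq, show 2*n - (2*n-j) = j by omega]
    ring
  rw [hsplit, I2 (2*n), I1 (2*n) (by omega), fq, show 2*n - 2*n = 0 by omega]
  simp only [Nat.factorial_zero, Nat.cast_one, mul_one]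
  ring

set_option maxHeartbeats 1000000 in
theorem zeta_even_recursion_b (n : ℕ) (hn : 0 < n) :
    riemannZeta (2 * n) = 1 / (2 * ((2 : ℂ) ^ (-(2 * (n : ℂ))) - 1)) *
      ∑ k ∈ Finset.Icc 1 n,
        (-(Real.pi : ℂ) ^ 2) ^ k * (1 - (2 : ℂ) ^ (1 - 2 * (n : ℂ) + 2 * (k : ℂ))) *
          riemannZeta (2 * (n : ℂ) - 2 * (k : ℂ)) / ((2 * k).factorial : ℂ) := by
  have hfac : ∀ m : ℕ, ((m.factorial : ℂ)) ≠ 0 :=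
    fun m => Nat.cast_ne_zero.mpr m.factorial_ne_zero
  have hterm : ∀ k ∈ Finset.Icc 1 n,
      (-(Real.pi:ℂ)^2)^k * (1 - (2:ℂ)^(1 - 2*(n:ℂ) + 2*(k:ℂ))) *
        riemannZeta (2*(n:ℂ) - 2*(k:ℂ)) / ((2*k).factorial : ℂ)
      = (-1)^(n+1) * (Real.pi:ℂ)^(2*n) *
        ((((2:ℚ)^(2*(n-k))/2 - 1) * bernoulli (2*(n-k)) /
          ((2*k).factorial * (2*(n-k)).factorial) : ℚ) : ℂ) := by
    intro k hk
    rw [Finset.mem_Icc] at hk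
    obtain ⟨hk1, hkn⟩ := hk
    have hexp : (1 : ℂ) - 2*(n:ℂ) + 2*(k:ℂ) = (((1 - 2*((n-k : ℕ) : ℤ)) : ℤ) : ℂ) := by
      push_cast [hkn]; ring
    have h2pow : (2:ℂ)^((1:ℂ) - 2*(n:ℂ) + 2*(k:ℂ)) = (2:ℂ)^(((1 - 2*((n-k:ℕ):ℤ)) : ℤ)) := by
      rw [hexp, Complex.cpow_intCast]
    have hzarg : 2*(n:ℂ) - 2*(k:ℂ) = 2 * ((n-k : ℕ) : ℂ) := by push_cast [hkn]; ring
    have hneg : (-(Real.pi:ℂ)^2)^k = (-1)^k * (Real.pi:ℂ)^(2*k) := by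
      rw [neg_pow, pow_mul]
    rcases eq_or_lt_of_le hkn with rfl | hlt
    · -- k = n
      rw [hzarg, h2pow, hneg]
      simp only [Nat.sub_self, mul_zero, Nat.cast_zero, riemannZeta_zero, bernoulli_zero]
      push_cast
      rw [zpow_one]
      field_simp
      ring
    · -- k < n
      have hm : n - k ≠ 0 := by omega
      rw [hzarg, h2pow, hneg, riemannZeta_two_mul_nat hm]
      have e1 : (2:ℂ)^(((1 - 2*((n-k:ℕ):ℤ)) : ℤ)) = 2 / (2:ℂ)^(2*(n-k)) := by
        have hi : ((1:ℤ) - 2*((n-k:ℕ):ℤ)) = 1 - ((2*(n-k) : ℕ) : ℤ) := by push_cast; ring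
        rw [hi, zpow_sub₀ (two_ne_zero), zpow_one, zpow_natCast]
      have e2 : (2:ℂ)^(2*(n-k)-1) = (2:ℂ)^(2*(n-k)) / 2 := by
        rw [eq_div_iff (two_ne_zero), ← pow_succ]
        congr 1
        omega
      have e3 : (Real.pi:ℂ)^(2*k) * (Real.pi:ℂ)^(2*(n-k)) = (Real.pi:ℂ)^(2*n) := by
        rw [← pow_add]; congr 1; omega
      have e4 : ((-1:ℂ))^k * (-1:ℂ)^(n-k+1) = (-1:ℂ)^(n+1) := by
        rw [← pow_add, show k + (n-k+1) = n+1 by omega]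
      have h2 : ((2:ℂ))^(2*(n-k)) ≠ 0 := pow_ne_zero _ two_ne_zero
      have hq : ((((2:ℚ)^(2*(n-k))/2 - 1) * bernoulli (2*(n-k)) /
          ((2*k).factorial * (2*(n-k)).factorial) : ℚ) : ℂ)
          = ((2:ℂ)^(2*(n-k))/2 - 1) * ((bernoulli (2*(n-k)) : ℚ) : ℂ) /
            (((2*k).factorial : ℂ) * ((2*(n-k)).factorial : ℂ)) := by
        push_cast
        ring
      rw [e1, e2, ← e3, ← e4, hq]
      field_simp
  rw [Finset.sum_congr rfl hterm, ← Finset.mul_sum, ← Rat.cast_sum, keyQ n hn,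
    riemannZeta_two_mul_nat hn.ne']
  have hneg2 : -(2*(n:ℂ)) = (((-(2*(n:ℕ) : ℤ)) : ℤ) : ℂ) := by push_cast; ring
  have hpref : (2:ℂ)^(-(2*(n:ℂ))) = ((2:ℂ)^(2*n))⁻¹ := by
    have hi : (-(2*(n:ℕ) : ℤ)) = -((2*n : ℕ) : ℤ) := by push_cast; ring
    rw [hneg2, Complex.cpow_intCast, hi, zpow_neg, zpow_natCast]
  have hx1 : (2:ℂ)^(2*n) ≠ 1 := by
    intro h
    rw [show (2:ℂ) = ((2:ℕ):ℂ) by norm_num, ← Nat.cast_pow, show (1:ℂ) = ((1:ℕ):ℂ) by norm_num,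
      Nat.cast_inj] at h
    have := Nat.one_lt_two_pow_iff.mpr (show 2*n ≠ 0 by omega)
    omega
  have h2 : ((2:ℂ))^(2*n) ≠ 0 := pow_ne_zero _ two_ne_zero
  have h1x : (1:ℂ) - 2^(2*n) ≠ 0 := sub_ne_zero.mpr (fun h => hx1 h.symm)
  have hrw : ((2:ℂ)^(2*n))⁻¹ - 1 = (1 - 2^(2*n)) / 2^(2*n) := by
    field_simp
  have e2 : (2:ℂ)^(2*n-1) = (2:ℂ)^(2*n) / 2 := by
    rw [eq_div_iff (two_ne_zero), ← pow_succ]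
    congr 1
    omega
  rw [hpref, hrw, e2]
  push_cast
  field_simp
end

section
/- The series ∑_{k=1}^{∞} log(1 + 1/(π² k²)) converges and its sum equals −1 − log(2) + log(e² − 1). -/
open Real Filter Finset Topology

theorem log_sum_pi_sq :
    HasSum (fun k : ℕ => Real.log (1 + 1 / (Real.pi ^ 2 * ((k : ℝ) + 1) ^ 2)))
      (-1 - Real.log 2 + Real.log (Real.exp 2 - 1)) := by
  have hpos : ∀ k : ℕ, (0:ℝ) < 1 + 1 / (π ^ 2 * ((k : ℝ) + 1) ^ 2) := by
    intro k
    have h1 : (0:ℝ) < π ^ 2 * ((k:ℝ)+1)^2 := by positivity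
    positivity
  have hsinh : (0:ℝ) < Real.sinh 1 := Real.sinh_pos_iff.mpr one_pos
  have hπ : (π : ℂ) ≠ 0 := Complex.ofReal_ne_zero.mpr pi_ne_zero
  have hprod : Tendsto (fun n : ℕ => ∏ j ∈ Finset.range n,
      (1 + 1 / (π ^ 2 * ((j : ℝ) + 1) ^ 2))) atTop (𝓝 (Real.sinh 1)) := by
    have h := (Complex.continuous_im.tendsto _).comp
      (Complex.tendsto_euler_sin_prod (Complex.I / π))
    have hπI : (π : ℂ) * (Complex.I / π) = Complex.I := by
      field_simp
    convert h using 2 with n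
    · rw [Function.comp_apply, hπI]
      have : ∏ j ∈ Finset.range n, ((1:ℂ) - (Complex.I / π) ^ 2 / ((j : ℂ) + 1) ^ 2)
          = ((∏ j ∈ Finset.range n, (1 + 1 / (π ^ 2 * ((j : ℝ) + 1) ^ 2)) : ℝ) : ℂ) := by
        rw [Complex.ofReal_prod]
        refine Finset.prod_congr rfl fun j _ => ?_
        have hj : ((j:ℂ)+1) ≠ 0 := Nat.cast_add_one_ne_zero j
        rw [div_pow, Complex.I_sq]
        push_cast
        field_simp
        ring
      rw [this]
      simp only [Complex.mul_im, Complex.I_re, Complex.I_im, Complex.ofReal_re,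
        Complex.ofReal_im]
      ring
    · rw [hπI]
      have : Complex.sin Complex.I = Complex.sinh 1 * Complex.I := by
        simpa using Complex.sin_mul_I 1
      rw [this]
      have h1 : Complex.sinh (1:ℂ) = ((Real.sinh 1 : ℝ) : ℂ) := by
        rw [Complex.ofReal_sinh, Complex.ofReal_one]
      rw [h1]
      simp only [Complex.mul_im, Complex.ofReal_re, Complex.ofReal_im,
        Complex.I_re, Complex.I_im]
      ring
  have hlog : Tendsto (fun n : ℕ => ∑ j ∈ Finset.range n,
      Real.log (1 + 1 / (π ^ 2 * ((j : ℝ) + 1) ^ 2))) atTop (𝓝 (Real.log (Real.sinh 1))) := by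
    have h := (Real.continuousAt_log hsinh.ne').tendsto.comp hprod
    refine h.congr fun n => ?_
    rw [Function.comp_apply, Real.log_prod]
    exact fun j _ => (hpos j).ne'
  have hval : Real.log (Real.sinh 1) = -1 - Real.log 2 + Real.log (Real.exp 2 - 1) := by
    have he : Real.sinh 1 = (Real.exp 2 - 1) / (2 * Real.exp 1) := by
      rw [Real.sinh_eq]
      have : Real.exp 2 = Real.exp 1 * Real.exp 1 := by
        rw [← Real.exp_add]; norm_num
      rw [Real.exp_neg, this]
      rw [div_eq_div_iff (by norm_num : (2:ℝ) ≠ 0) (by positivity : (2 * Real.exp 1 : ℝ) ≠ 0)]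
      have hne : Real.exp 1 ≠ 0 := (Real.exp_pos 1).ne'
      field_simp
    have h2 : (1:ℝ) < Real.exp 2 := by
      have := Real.add_one_lt_exp (by norm_num : (2:ℝ) ≠ 0)
      linarith
    rw [he, Real.log_div (by linarith) (by positivity),
      Real.log_mul (by norm_num) (Real.exp_pos 1).ne', Real.log_exp]
    ring
  rw [← hval]
  rw [hasSum_iff_tendsto_nat_of_nonneg]
  · exact hlog
  · intro i
    exact Real.log_nonneg (by nlinarith [hpos i, (hpos i).le, le_of_lt (show (0:ℝ) < 1/(π^2*((i:ℝ)+1)^2) by positivity)])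
end
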